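/- (Garsia–Rodemich–Rumsey inequality) For any p ≥ 1 and θ > 1/p, there exists a constant C_{θ,p} > 0 such that for any continuous function f : [0,T] → ℝ and any 0 ≤ s ≤ t ≤ T, |f(t) - f(s)|^p ≤ C_{θ,p} |t-s|^{θp - 1} ∫₀ᵀ ∫₀ᵀ |f(x) - f(y)|^p / |x-y|^{θp+1} dx dy. -/

import Mathlib

open MeasureTheory Set Filter Topology
open scoped ENNReal

lemma grr_measF (f : ℝ → ℝ) (hf : Continuous f) (p c : ℝ) (hp : 0 ≤ p) (hc : 0 ≤ c) :
    Measurable (fun q : ℝ × ℝ => ENNReal.ofReal (|f q.1 - f q.2| ^ p / |q.1 - q.2| ^ c)) := by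
  apply ENNReal.measurable_ofReal.comp
  apply Measurable.div
  · exact (((hf.comp continuous_fst).sub (hf.comp continuous_snd)).abs.rpow_const
      (fun x => Or.inr hp)).measurable
  · exact ((continuous_fst.sub continuous_snd).abs.rpow_const (fun x => Or.inr hc)).measurable

lemma grr_good {I : Set ℝ} (g1 g2 : ℝ → ℝ≥0∞)
    (hg1 : Measurable g1) (hg2 : Measurable g2) (L1 L2 : ℝ≥0∞)
    (hL1 : L1 ≠ 0) (hL1' : L1 ≠ ⊤) (hL2 : L2 ≠ 0) (hL2' : L2 ≠ ⊤)
    (hsum : (∫⁻ x in I, g1 x) / L1 + (∫⁻ x in I, g2 x) / L2 < volume I) :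
    ∃ w ∈ I, g1 w < L1 ∧ g2 w < L2 := by
  by_contra h
  push_neg at h
  have hsub : I ⊆ {x | L1 ≤ g1 x} ∪ {x | L2 ≤ g2 x} := by
    intro w hw
    rcases le_or_gt L1 (g1 w) with h1 | h1
    · exact Or.inl h1
    · exact Or.inr (h w hw h1)
  have m1 := meas_ge_le_lintegral_div (μ := volume.restrict I) hg1.aemeasurable hL1 hL1'
  have m2 := meas_ge_le_lintegral_div (μ := volume.restrict I) hg2.aemeasurable hL2 hL2'
  have : volume I ≤ (∫⁻ x in I, g1 x) / L1 + (∫⁻ x in I, g2 x) / L2 := by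
    calc volume I = volume.restrict I I := (Measure.restrict_apply_self _ _).symm
    _ ≤ volume.restrict I ({x | L1 ≤ g1 x} ∪ {x | L2 ≤ g2 x}) := measure_mono hsub
    _ ≤ volume.restrict I {x | L1 ≤ g1 x} + volume.restrict I {x | L2 ≤ g2 x} :=
        measure_union_le _ _
    _ ≤ (∫⁻ x in I, g1 x) / L1 + (∫⁻ x in I, g2 x) / L2 := add_le_add m1 m2
  exact absurd hsum (not_lt.mpr this)

set_option maxHeartbeats 2000000 in
lemma grr_chain (p θ : ℝ) (hp : 1 ≤ p) (hθ : 1 / p < θ)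
    (f : ℝ → ℝ) (hf : Continuous f) (s t : ℝ) (hst : s < t) (b a : ℝ)
    (hb0 : 0 ≤ b) (hba : b < a)
    (hB : (∫⁻ x in Ioc s t, ∫⁻ y in Ioc s t,
        ENNReal.ofReal (|f x - f y| ^ p / |x - y| ^ (θ * p + 1))) ≤ ENNReal.ofReal b)
    (u0 : ℝ) (hu0 : u0 ∈ Ioc s t)
    (hBu0 : (∫⁻ y in Ioc s t, ENNReal.ofReal (|f u0 - f y| ^ p / |u0 - y| ^ (θ * p + 1)))
        ≤ ENNReal.ofReal (4 * a / (u0 - s))) :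
    |f u0 - f s| ≤
      (64 * a) ^ (1 / p) * (1 - (1 / 2 : ℝ) ^ (θ - 1 / p))⁻¹ * (u0 - s) ^ (θ - 1 / p) := by
  have hp0 : 0 < p := lt_of_lt_of_le one_pos hp
  have hinvp : 0 < 1 / p := by positivity
  have hα : 0 < θ - 1 / p := sub_pos.mpr hθ
  have hθ0 : 0 < θ := lt_trans hinvp hθ
  have hθp1 : 1 < θ * p := by
    have := (div_lt_iff₀ hp0).mp hθ
    linarith
  have hcpos : 0 < θ * p + 1 := by linarith
  have ha : 0 < a := lt_of_le_of_lt hb0 hba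
  have hFm := grr_measF f hf p (θ * p + 1) (le_of_lt hp0) hcpos.le
  set Bf : ℝ → ℝ≥0∞ :=
    fun x => ∫⁻ y in Ioc s t, ENNReal.ofReal (|f x - f y| ^ p / |x - y| ^ (θ * p + 1))
    with hBfdef
  have hBm : Measurable Bf :=
    Measurable.lintegral_prod_right' (ν := volume.restrict (Ioc s t)) hFm
  have hFxm : ∀ v : ℝ, Measurable
      (fun y => ENNReal.ofReal (|f v - f y| ^ p / |v - y| ^ (θ * p + 1))) :=
    fun v => hFm.comp measurable_prodMk_left
  -- the inductive step
  have step : ∀ v, v ∈ Ioc s t → Bf v ≤ ENNReal.ofReal (4 * a / (v - s)) →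
      ∃ w, w ∈ Ioc s t ∧ Bf w ≤ ENNReal.ofReal (4 * a / (w - s)) ∧
        w - s ≤ (v - s) / 2 ∧
        |f v - f w| ≤ (64 * a) ^ (1 / p) * (v - s) ^ (θ - 1 / p) := by
    intro v hv hBv
    have hdv : 0 < v - s := sub_pos.mpr hv.1
    have hdvt : v - s ≤ t - s := by linarith [hv.2]
    have hIsub : Ioo s (s + (v - s) / 2) ⊆ Ioc s t := by
      intro x hx
      exact ⟨hx.1, by linarith [hx.2]⟩
    have e1 : (∫⁻ x in Ioo s (s + (v - s) / 2), Bf x) ≤ ENNReal.ofReal b :=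
      le_trans (lintegral_mono_set hIsub) hB
    have e2 : (∫⁻ x in Ioo s (s + (v - s) / 2),
        ENNReal.ofReal (|f v - f x| ^ p / |v - x| ^ (θ * p + 1))) ≤
        ENNReal.ofReal (4 * a / (v - s)) :=
      le_trans (lintegral_mono_set hIsub) hBv
    obtain ⟨w, hwI, hw1, hw2⟩ := grr_good Bf
      (fun y => ENNReal.ofReal (|f v - f y| ^ p / |v - y| ^ (θ * p + 1)))
      hBm (hFxm v)
      (ENNReal.ofReal (8 * a / (v - s))) (ENNReal.ofReal (64 * a / (v - s) ^ 2))
      (by simp [ENNReal.ofReal_eq_zero, not_le]; positivity)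
      ENNReal.ofReal_ne_top
      (by simp [ENNReal.ofReal_eq_zero, not_le]; positivity)
      ENNReal.ofReal_ne_top
      (by
        have key : b / (8 * a / (v - s)) + (4 * a / (v - s)) / (64 * a / (v - s) ^ 2)
            < (v - s) / 2 := by
          have h1 : b / (8 * a / (v - s)) = b * (v - s) / (8 * a) := by
            field_simp
          have h2 : (4 * a / (v - s)) / (64 * a / (v - s) ^ 2) = (v - s) / 16 := by
            field_simp; ring
          rw [h1, h2]
          rw [div_add_div _ _ (by positivity) (by norm_num), div_lt_div_iff₀ (by positivity)
            (by norm_num)]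
          nlinarith [mul_pos hdv (sub_pos.mpr hba)]
        calc (∫⁻ x in Ioo s (s + (v - s) / 2), Bf x) / ENNReal.ofReal (8 * a / (v - s)) +
            (∫⁻ x in Ioo s (s + (v - s) / 2),
              ENNReal.ofReal (|f v - f x| ^ p / |v - x| ^ (θ * p + 1))) /
              ENNReal.ofReal (64 * a / (v - s) ^ 2)
            ≤ ENNReal.ofReal b / ENNReal.ofReal (8 * a / (v - s)) +
              ENNReal.ofReal (4 * a / (v - s)) / ENNReal.ofReal (64 * a / (v - s) ^ 2) :=
              add_le_add (ENNReal.div_le_div_right e1 _) (ENNReal.div_le_div_right e2 _)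
          _ = ENNReal.ofReal (b / (8 * a / (v - s)) +
              (4 * a / (v - s)) / (64 * a / (v - s) ^ 2)) := by
              rw [← ENNReal.ofReal_div_of_pos (by positivity),
                ← ENNReal.ofReal_div_of_pos (by positivity),
                ← ENNReal.ofReal_add (by positivity) (by positivity)]
          _ < ENNReal.ofReal ((v - s) / 2) := by
              exact (ENNReal.ofReal_lt_ofReal_iff (by positivity)).mpr key
          _ = volume (Ioo s (s + (v - s) / 2)) := by
              rw [Real.volume_Ioo]; congr 1; ring)
    have hws : 0 < w - s := sub_pos.mpr hwI.1
    have hwhalf : w - s ≤ (v - s) / 2 := by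
      have := hwI.2; linarith
    refine ⟨w, hIsub hwI, ?_, hwhalf, ?_⟩
    · refine le_trans hw1.le (ENNReal.ofReal_le_ofReal ?_)
      rw [div_le_div_iff₀ (by positivity) (by positivity)]
      nlinarith
    · -- the step estimate
      have hvw : 0 < v - w := by
        have := hwI.2; linarith
      have habs : |v - w| ≤ v - s := by
        rw [abs_of_pos hvw]; linarith [hwI.1]
      have hX : (0:ℝ) ≤ |f v - f w| ^ p / |v - w| ^ (θ * p + 1) := by positivity
      have hlt : |f v - f w| ^ p / |v - w| ^ (θ * p + 1) < 64 * a / (v - s) ^ 2 :=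
        (ENNReal.ofReal_lt_ofReal_iff_of_nonneg hX).mp hw2
      have hD : (0:ℝ) < |v - w| ^ (θ * p + 1) :=
        Real.rpow_pos_of_pos (abs_pos.mpr (ne_of_gt hvw)) _
      have hDle : |v - w| ^ (θ * p + 1) ≤ (v - s) ^ (θ * p + 1) :=
        Real.rpow_le_rpow (abs_nonneg _) habs hcpos.le
      have hN : |f v - f w| ^ p ≤ 64 * a / (v - s) ^ 2 * (v - s) ^ (θ * p + 1) := by
        have := (div_le_iff₀ hD).mp hlt.le
        calc |f v - f w| ^ p ≤ 64 * a / (v - s) ^ 2 * |v - w| ^ (θ * p + 1) := this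
          _ ≤ 64 * a / (v - s) ^ 2 * (v - s) ^ (θ * p + 1) := by
            apply mul_le_mul_of_nonneg_left hDle (by positivity)
      have hNval : 64 * a / (v - s) ^ 2 * (v - s) ^ (θ * p + 1) =
          64 * a * (v - s) ^ (θ * p - 1) := by
        rw [div_mul_eq_mul_div, mul_div_assoc]
        congr 1
        rw [← Real.rpow_natCast (v - s) 2, ← Real.rpow_sub hdv]
        congr 1
        push_cast
        ring
      rw [hNval] at hN
      have hfin : |f v - f w| ≤ (64 * a * (v - s) ^ (θ * p - 1)) ^ (1 / p) := by
        have h1 : |f v - f w| = (|f v - f w| ^ p) ^ (1 / p) := by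
          rw [← Real.rpow_mul (abs_nonneg _), mul_one_div, div_self (ne_of_gt hp0),
            Real.rpow_one]
        rw [h1]
        exact Real.rpow_le_rpow (by positivity) hN (by positivity)
      calc |f v - f w| ≤ (64 * a * (v - s) ^ (θ * p - 1)) ^ (1 / p) := hfin
        _ = (64 * a) ^ (1 / p) * (v - s) ^ (θ - 1 / p) := by
          rw [Real.mul_rpow (by positivity) (by positivity),
            ← Real.rpow_mul hdv.le]
          congr 1
          field_simp
  choose! W hWmem hWB hWhalf hWstep using step
  set u : ℕ → ℝ := fun n => W^[n] u0 with hudef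
  have hu0' : u 0 = u0 := rfl
  have husucc : ∀ n, u (n + 1) = W (u n) := fun n => Function.iterate_succ_apply' W n u0
  have hPn : ∀ n, u n ∈ Ioc s t ∧ Bf (u n) ≤ ENNReal.ofReal (4 * a / (u n - s)) := by
    intro n
    induction n with
    | zero => exact ⟨hu0, hBu0⟩
    | succ n ih =>
      rw [husucc]
      exact ⟨hWmem _ ih.1 ih.2, hWB _ ih.1 ih.2⟩
  have hpos : ∀ n, 0 < u n - s := fun n => sub_pos.mpr (hPn n).1.1
  have hd0 : 0 < u0 - s := hpos 0
  have hdecay : ∀ n, u n - s ≤ (u0 - s) * (1 / 2 : ℝ) ^ n := by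
    intro n
    induction n with
    | zero => simp [hu0']
    | succ n ih =>
      have h := hWhalf _ (hPn n).1 (hPn n).2
      rw [← husucc] at h
      calc u (n + 1) - s ≤ (u n - s) / 2 := h
        _ ≤ ((u0 - s) * (1 / 2 : ℝ) ^ n) / 2 := by linarith
        _ = (u0 - s) * (1 / 2 : ℝ) ^ (n + 1) := by ring
  set r : ℝ := (1 / 2 : ℝ) ^ (θ - 1 / p) with hrdef
  have hr0 : 0 < r := Real.rpow_pos_of_pos (by norm_num) _
  have hr1 : r < 1 := Real.rpow_lt_one (by norm_num) (by norm_num) hα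
  set c1 : ℝ := (64 * a) ^ (1 / p) with hc1def
  have hc1 : 0 < c1 := Real.rpow_pos_of_pos (by positivity) _
  have hstepn : ∀ n, |f (u n) - f (u (n + 1))| ≤ c1 * (u0 - s) ^ (θ - 1 / p) * r ^ n := by
    intro n
    have h := hWstep _ (hPn n).1 (hPn n).2
    rw [← husucc] at h
    refine h.trans ?_
    have h2 : (u n - s) ^ (θ - 1 / p) ≤ ((u0 - s) * (1 / 2 : ℝ) ^ n) ^ (θ - 1 / p) :=
      Real.rpow_le_rpow (hpos n).le (hdecay n) hα.le
    have h3 : ((u0 - s) * (1 / 2 : ℝ) ^ n) ^ (θ - 1 / p) =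
        (u0 - s) ^ (θ - 1 / p) * r ^ n := by
      rw [Real.mul_rpow hd0.le (by positivity)]
      congr 1
      rw [← Real.rpow_natCast ((1 / 2 : ℝ)) n, ← Real.rpow_mul (by norm_num),
        mul_comm (n : ℝ) (θ - 1 / p), Real.rpow_mul (by norm_num), Real.rpow_natCast]
    calc c1 * (u n - s) ^ (θ - 1 / p) ≤ c1 * ((u0 - s) * (1 / 2 : ℝ) ^ n) ^ (θ - 1 / p) :=
        mul_le_mul_of_nonneg_left h2 hc1.le
      _ = c1 * (u0 - s) ^ (θ - 1 / p) * r ^ n := by rw [h3]; ring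
  have hsumN : ∀ N, dist (f (u 0)) (f (u N)) ≤
      c1 * (u0 - s) ^ (θ - 1 / p) * (1 - r)⁻¹ := by
    intro N
    calc dist (f (u 0)) (f (u N)) ≤
        ∑ i ∈ Finset.range N, dist (f (u i)) (f (u (i + 1))) :=
          dist_le_range_sum_dist (fun n => f (u n)) N
      _ ≤ ∑ i ∈ Finset.range N, c1 * (u0 - s) ^ (θ - 1 / p) * r ^ i :=
          Finset.sum_le_sum (fun i _ => by rw [Real.dist_eq]; exact hstepn i)
      _ = (c1 * (u0 - s) ^ (θ - 1 / p)) * ∑ i ∈ Finset.range N, r ^ i := by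
          rw [Finset.mul_sum]
      _ ≤ (c1 * (u0 - s) ^ (θ - 1 / p)) * (1 - r)⁻¹ := by
          apply mul_le_mul_of_nonneg_left ?_ (by positivity)
          have hs := Summable.sum_le_tsum (Finset.range N)
            (fun i _ => (pow_nonneg hr0.le i)) (summable_geometric_of_lt_one hr0.le hr1)
          rwa [tsum_geometric_of_lt_one hr0.le hr1] at hs
  have hulim : Tendsto u atTop (𝓝 s) := by
    have h1 : Tendsto (fun n : ℕ => s + (u0 - s) * (1 / 2 : ℝ) ^ n) atTop (𝓝 s) := by
      have := (tendsto_pow_atTop_nhds_zero_of_lt_one (by norm_num : (0:ℝ) ≤ 1/2)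
        (by norm_num : (1/2 : ℝ) < 1)).const_mul (u0 - s)
      have h2 := (tendsto_const_nhds (x := s) (f := atTop (α := ℕ))).add this
      simpa using h2
    refine tendsto_of_tendsto_of_tendsto_of_le_of_le
      (tendsto_const_nhds : Tendsto (fun _ : ℕ => s) atTop (𝓝 s)) h1
      (fun n => by linarith [hpos n]) (fun n => by linarith [hdecay n])
  have hflim : Tendsto (fun N => dist (f (u 0)) (f (u N))) atTop
      (𝓝 (dist (f u0) (f s))) := by
    have h2 : Tendsto (fun N => f (u N)) atTop (𝓝 (f s)) := (hf.tendsto s).comp hulim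
    have h3 := Filter.Tendsto.dist
      (tendsto_const_nhds : Tendsto (fun _ : ℕ => f (u 0)) atTop (𝓝 (f (u 0)))) h2
    simpa [hu0'] using h3
  have final := le_of_tendsto hflim (Filter.Eventually.of_forall hsumN)
  rw [Real.dist_eq] at final
  exact le_of_le_of_eq final (by ring)

lemma grr_refl (F : ℝ → ℝ≥0∞) (s t : ℝ) :
    ∫⁻ y in Ioc s t, F (s + t - y) = ∫⁻ y in Ioc s t, F y := by
  have h1 : MeasurePreserving (fun y : ℝ => (s + t) - y) volume volume :=
    Measure.measurePreserving_sub_left volume (s + t)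
  have h2 : MeasurableEmbedding (fun y : ℝ => (s + t) - y) :=
    (MeasurableEquiv.subLeft (s + t)).measurableEmbedding
  have h3 := h1.setLIntegral_comp_preimage_emb h2 F (Ioc s t)
  have h4 : (fun y : ℝ => (s + t) - y) ⁻¹' Ioc s t = Ico s t := by
    ext y; simp only [mem_preimage, mem_Ioc, mem_Ico]; constructor <;> intro h <;>
      constructor <;> linarith [h.1, h.2]
  rw [h4] at h3
  rw [← h3, Measure.restrict_congr_set Ico_ae_eq_Ioc]

set_option maxHeartbeats 2000000 in
theorem stmt_4 (p θ : ℝ) (hp : 1 ≤ p) (hθ : 1 / p < θ) :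
    ∃ C > 0, ∀ T : ℝ, 0 < T → ∀ f : ℝ → ℝ, ContinuousOn f (Icc 0 T) →
      ∀ s t : ℝ, 0 ≤ s → s ≤ t → t ≤ T →
        ENNReal.ofReal (|f t - f s| ^ p) ≤
          ENNReal.ofReal (C * |t - s| ^ (θ * p - 1)) *
            ∫⁻ x in Ioc (0:ℝ) T, ∫⁻ y in Ioc (0:ℝ) T,
              ENNReal.ofReal (|f x - f y| ^ p / |x - y| ^ (θ * p + 1)) := by
  have hp0 : 0 < p := lt_of_lt_of_le one_pos hp
  have hα : 0 < θ - 1 / p := sub_pos.mpr hθ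
  have hr1 : (1 / 2 : ℝ) ^ (θ - 1 / p) < 1 :=
    Real.rpow_lt_one (by norm_num) (by norm_num) hα
  have hr0 : (0:ℝ) < (1 / 2 : ℝ) ^ (θ - 1 / p) := Real.rpow_pos_of_pos (by norm_num) _
  set K : ℝ := 2 * (64 : ℝ) ^ (1 / p) * (1 - (1 / 2 : ℝ) ^ (θ - 1 / p))⁻¹ with hKdef
  have hK : 0 < K := by
    apply mul_pos (mul_pos two_pos (Real.rpow_pos_of_pos (by norm_num) _))
    exact inv_pos.mpr (by linarith)
  refine ⟨K ^ p, Real.rpow_pos_of_pos hK p, ?_⟩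
  intro T hT f hfc s t hs hst hT'
  have h0T : (0:ℝ) ≤ T := le_trans hs (le_trans hst hT')
  -- continuous extension of f
  set g : ℝ → ℝ := IccExtend h0T ((Icc (0:ℝ) T).restrict f) with hgdef
  have hg : Continuous g :=
    (continuousOn_iff_continuous_restrict.mp hfc).Icc_extend'
  have hgf : ∀ x ∈ Icc (0:ℝ) T, g x = f x := fun x hx => by
    rw [hgdef, IccExtend_of_mem h0T _ hx]; rfl
  have hmemt : t ∈ Icc (0:ℝ) T := ⟨le_trans hs hst, hT'⟩
  have hmems : s ∈ Icc (0:ℝ) T := ⟨hs, le_trans hst hT'⟩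
  have hIocsub : Ioc (0:ℝ) T ⊆ Icc 0 T := Ioc_subset_Icc_self
  have hint : (∫⁻ x in Ioc (0:ℝ) T, ∫⁻ y in Ioc (0:ℝ) T,
      ENNReal.ofReal (|f x - f y| ^ p / |x - y| ^ (θ * p + 1))) =
      (∫⁻ x in Ioc (0:ℝ) T, ∫⁻ y in Ioc (0:ℝ) T,
      ENNReal.ofReal (|g x - g y| ^ p / |x - y| ^ (θ * p + 1))) := by
    apply setLIntegral_congr_fun measurableSet_Ioc
    intro x hx
    apply setLIntegral_congr_fun measurableSet_Ioc
    intro y hy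
    beta_reduce
    rw [hgf x (hIocsub hx), hgf y (hIocsub hy)]
  rw [hint, show f t = g t from (hgf t hmemt).symm, show f s = g s from (hgf s hmems).symm,
    show |t - s| = t - s from abs_of_nonneg (sub_nonneg.mpr hst)]
  rcases eq_or_lt_of_le hst with heq | hlt
  · rw [← heq]
    simp [sub_self, abs_zero, Real.zero_rpow (ne_of_gt hp0)]
  · set Btot := ∫⁻ x in Ioc (0:ℝ) T, ∫⁻ y in Ioc (0:ℝ) T,
      ENNReal.ofReal (|g x - g y| ^ p / |x - y| ^ (θ * p + 1)) with hBtotdef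
    have hd : 0 < t - s := sub_pos.mpr hlt
    rcases eq_top_or_lt_top Btot with htop | hfin
    · rw [htop, ENNReal.mul_top]
      · exact le_top
      · simp only [ne_eq, ENNReal.ofReal_eq_zero, not_le]
        positivity
    · have hsub2 : Ioc s t ⊆ Ioc (0:ℝ) T := Ioc_subset_Ioc hs hT'
      set Bst := ∫⁻ x in Ioc s t, ∫⁻ y in Ioc s t,
        ENNReal.ofReal (|g x - g y| ^ p / |x - y| ^ (θ * p + 1)) with hBstdef
      have hBle : Bst ≤ Btot := by
        calc Bst ≤ ∫⁻ x in Ioc s t, ∫⁻ y in Ioc (0:ℝ) T,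
            ENNReal.ofReal (|g x - g y| ^ p / |x - y| ^ (θ * p + 1)) :=
              lintegral_mono (fun x => lintegral_mono_set hsub2)
          _ ≤ Btot := lintegral_mono_set hsub2
      have hBst_ne : Bst ≠ ⊤ := (lt_of_le_of_lt hBle hfin).ne
      set b := Bst.toReal with hbdef
      have hBofReal : ENNReal.ofReal b = Bst := ENNReal.ofReal_toReal hBst_ne
      have hb0 : 0 ≤ b := ENNReal.toReal_nonneg
      -- measurability of the B-function
      have hθ0 : 0 < θ := lt_trans (by positivity : (0:ℝ) < 1 / p) hθ
      have hθp1 : 1 < θ * p := by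
        have := (div_lt_iff₀ hp0).mp hθ; linarith
      have hFm := grr_measF g hg p (θ * p + 1) (le_of_lt hp0) (by linarith)
      have hBm : Measurable (fun x => ∫⁻ y in Ioc s t,
          ENNReal.ofReal (|g x - g y| ^ p / |x - y| ^ (θ * p + 1))) :=
        Measurable.lintegral_prod_right' (ν := volume.restrict (Ioc s t)) hFm
      -- main claim with epsilon slack
      have claim : ∀ ε : ℝ, 0 < ε →
          |g t - g s| ^ p ≤ K ^ p * (t - s) ^ (θ * p - 1) * (b + ε) := by
        intro ε hε
        set aa := b + ε with haadef
        have hba : b < aa := lt_add_of_pos_right b hε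
        have ha0 : 0 < aa := lt_of_le_of_lt hb0 hba
        -- select a good starting point u
        obtain ⟨u, huI, hu1, -⟩ := grr_good
          (fun x => ∫⁻ y in Ioc s t,
            ENNReal.ofReal (|g x - g y| ^ p / |x - y| ^ (θ * p + 1)))
          (fun _ => (0:ℝ≥0∞)) hBm measurable_const
          (ENNReal.ofReal (2 * aa / (t - s))) 1
          (by simp only [ne_eq, ENNReal.ofReal_eq_zero, not_le]; positivity)
          ENNReal.ofReal_ne_top one_ne_zero ENNReal.one_ne_top
          (by
            have hz : (∫⁻ _ in Ioo s t, (0:ℝ≥0∞)) / 1 = 0 := by simp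
            rw [hz, add_zero]
            have h1 : (∫⁻ x in Ioo s t, ∫⁻ y in Ioc s t,
                ENNReal.ofReal (|g x - g y| ^ p / |x - y| ^ (θ * p + 1))) ≤
                ENNReal.ofReal b := by
              rw [hBofReal]
              exact lintegral_mono_set Ioo_subset_Ioc_self
            calc (∫⁻ x in Ioo s t, ∫⁻ y in Ioc s t,
                ENNReal.ofReal (|g x - g y| ^ p / |x - y| ^ (θ * p + 1))) /
                  ENNReal.ofReal (2 * aa / (t - s))
                ≤ ENNReal.ofReal b / ENNReal.ofReal (2 * aa / (t - s)) :=
                  ENNReal.div_le_div_right h1 _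
              _ = ENNReal.ofReal (b / (2 * aa / (t - s))) :=
                  (ENNReal.ofReal_div_of_pos (by positivity)).symm
              _ < ENNReal.ofReal (t - s) := by
                  apply (ENNReal.ofReal_lt_ofReal_iff hd).mpr
                  have hq : b / (2 * aa / (t - s)) = b * (t - s) / (2 * aa) := by
                    field_simp
                  rw [hq, div_lt_iff₀ (by positivity)]
                  nlinarith [mul_pos hd ha0, mul_pos hd (sub_pos.mpr hba)]
              _ = volume (Ioo s t) := (Real.volume_Ioo ▸ rfl))
        have humem : u ∈ Ioc s t := Ioo_subset_Ioc_self huI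
        have hus : 0 < u - s := sub_pos.mpr huI.1
        have hut : u < t := huI.2
        -- first chain: from u down to s
        have hchain1 := grr_chain p θ hp hθ g hg s t hlt b aa hb0 hba
          (le_of_eq hBofReal.symm) u humem
          (by
            refine le_trans hu1.le (ENNReal.ofReal_le_ofReal ?_)
            rw [div_le_div_iff₀ (by positivity) (by positivity)]
            nlinarith)
        -- second chain: reflected function, from s+t-u down to s
        have hgr : Continuous (fun x : ℝ => g (s + t - x)) :=
          hg.comp (continuous_const.sub continuous_id)
        have hreflB : ∀ x : ℝ, (∫⁻ y in Ioc s t,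
            ENNReal.ofReal (|g (s + t - x) - g (s + t - y)| ^ p /
              |x - y| ^ (θ * p + 1))) =
            ∫⁻ y in Ioc s t,
            ENNReal.ofReal (|g (s + t - x) - g y| ^ p /
              |(s + t - x) - y| ^ (θ * p + 1)) := by
          intro x
          have e : ∀ y : ℝ, ENNReal.ofReal (|g (s + t - x) - g (s + t - y)| ^ p /
              |x - y| ^ (θ * p + 1)) =
              (fun z => ENNReal.ofReal (|g (s + t - x) - g z| ^ p /
                |(s + t - x) - z| ^ (θ * p + 1))) (s + t - y) := by
            intro y
            simp only
            have harg : (s + t - x) - (s + t - y) = y - x := by ring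
            rw [harg, abs_sub_comm y x]
          calc (∫⁻ y in Ioc s t, ENNReal.ofReal (|g (s + t - x) - g (s + t - y)| ^ p /
              |x - y| ^ (θ * p + 1)))
              = ∫⁻ y in Ioc s t, (fun z => ENNReal.ofReal (|g (s + t - x) - g z| ^ p /
                |(s + t - x) - z| ^ (θ * p + 1))) (s + t - y) :=
                lintegral_congr (fun y => e y)
            _ = _ := grr_refl (fun z => ENNReal.ofReal (|g (s + t - x) - g z| ^ p /
                |(s + t - x) - z| ^ (θ * p + 1))) s t
        have hBgr : (∫⁻ x in Ioc s t, ∫⁻ y in Ioc s t,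
            ENNReal.ofReal (|g (s + t - x) - g (s + t - y)| ^ p /
              |x - y| ^ (θ * p + 1))) ≤ ENNReal.ofReal b := by
          calc (∫⁻ x in Ioc s t, ∫⁻ y in Ioc s t,
              ENNReal.ofReal (|g (s + t - x) - g (s + t - y)| ^ p /
                |x - y| ^ (θ * p + 1)))
              = ∫⁻ x in Ioc s t, (fun z => ∫⁻ y in Ioc s t,
                ENNReal.ofReal (|g z - g y| ^ p / |z - y| ^ (θ * p + 1))) (s + t - x) :=
                lintegral_congr (fun x => hreflB x)
            _ = ∫⁻ x in Ioc s t, ∫⁻ y in Ioc s t,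
                ENNReal.ofReal (|g x - g y| ^ p / |x - y| ^ (θ * p + 1)) :=
                grr_refl (fun z => ∫⁻ y in Ioc s t,
                  ENNReal.ofReal (|g z - g y| ^ p / |z - y| ^ (θ * p + 1))) s t
            _ = Bst := rfl
            _ ≤ ENNReal.ofReal b := le_of_eq hBofReal.symm
        have hu'mem : s + t - u ∈ Ioc s t := ⟨by linarith, by linarith⟩
        have hchain2 := grr_chain p θ hp hθ (fun x => g (s + t - x)) hgr s t hlt b aa
          hb0 hba hBgr (s + t - u) hu'mem
          (by
            have harg2 : s + t - (s + t - u) = u := by ring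
            calc (∫⁻ y in Ioc s t,
                ENNReal.ofReal (|g (s + t - (s + t - u)) - g (s + t - y)| ^ p /
                  |(s + t - u) - y| ^ (θ * p + 1)))
                = ∫⁻ y in Ioc s t,
                  ENNReal.ofReal (|g u - g y| ^ p / |u - y| ^ (θ * p + 1)) := by
                  rw [hreflB (s + t - u), harg2]
              _ ≤ ENNReal.ofReal (4 * aa / ((s + t - u) - s)) := by
                  refine le_trans hu1.le (ENNReal.ofReal_le_ofReal ?_)
                  rw [div_le_div_iff₀ (by positivity) (by linarith : (0:ℝ) < s + t - u - s)]
                  nlinarith)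
        -- combine the two chains
        have harg2 : s + t - (s + t - u) = u := by ring
        have harg3 : s + t - s = t := by ring
        rw [harg2, harg3] at hchain2
        have hub1 : |g u - g s| ≤ (64 * aa) ^ (1 / p) *
            (1 - (1 / 2 : ℝ) ^ (θ - 1 / p))⁻¹ * (t - s) ^ (θ - 1 / p) := by
          refine hchain1.trans ?_
          apply mul_le_mul_of_nonneg_left _
            (mul_nonneg (Real.rpow_nonneg (by positivity) _) (inv_nonneg.mpr (by linarith)))
          exact Real.rpow_le_rpow hus.le (by linarith) hα.le
        have hub2 : |g u - g t| ≤ (64 * aa) ^ (1 / p) *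
            (1 - (1 / 2 : ℝ) ^ (θ - 1 / p))⁻¹ * (t - s) ^ (θ - 1 / p) := by
          refine hchain2.trans ?_
          apply mul_le_mul_of_nonneg_left _
            (mul_nonneg (Real.rpow_nonneg (by positivity) _) (inv_nonneg.mpr (by linarith)))
          exact Real.rpow_le_rpow (by linarith) (by linarith) hα.le
        have hcomb : |g t - g s| ≤ K * aa ^ (1 / p) * (t - s) ^ (θ - 1 / p) := by
          have h1 : |g t - g s| ≤ |g t - g u| + |g u - g s| := abs_sub_le _ _ _
          have h2 : |g t - g u| = |g u - g t| := abs_sub_comm _ _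
          have h64 : (64 * aa) ^ (1 / p) = (64:ℝ) ^ (1 / p) * aa ^ (1 / p) :=
            Real.mul_rpow (by norm_num) ha0.le
          rw [h2] at h1
          calc |g t - g s| ≤ |g u - g t| + |g u - g s| := h1
            _ ≤ 2 * ((64 * aa) ^ (1 / p) *
                (1 - (1 / 2 : ℝ) ^ (θ - 1 / p))⁻¹ * (t - s) ^ (θ - 1 / p)) := by
                linarith
            _ = K * aa ^ (1 / p) * (t - s) ^ (θ - 1 / p) := by
                rw [h64, hKdef]; ring
        -- raise to the power p
        have hfin2 : |g t - g s| ^ p ≤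
            (K * aa ^ (1 / p) * (t - s) ^ (θ - 1 / p)) ^ p :=
          Real.rpow_le_rpow (abs_nonneg _) hcomb hp0.le
        have hexpand : (K * aa ^ (1 / p) * (t - s) ^ (θ - 1 / p)) ^ p =
            K ^ p * (t - s) ^ (θ * p - 1) * aa := by
          rw [Real.mul_rpow (by positivity) (by positivity),
            Real.mul_rpow (by positivity) (by positivity),
            ← Real.rpow_mul ha0.le, ← Real.rpow_mul hd.le,
            one_div_mul_cancel (ne_of_gt hp0), Real.rpow_one]
          have : (θ - 1 / p) * p = θ * p - 1 := by field_simp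
          rw [this]; ring
        rw [hexpand] at hfin2
        exact hfin2
      -- pass to the limit ε → 0
      have hC : 0 < K ^ p * (t - s) ^ (θ * p - 1) := by positivity
      have hfinal : |g t - g s| ^ p ≤ K ^ p * (t - s) ^ (θ * p - 1) * b := by
        apply le_of_forall_pos_le_add
        intro δ hδ
        have h := claim (δ / (K ^ p * (t - s) ^ (θ * p - 1))) (div_pos hδ hC)
        calc |g t - g s| ^ p ≤ K ^ p * (t - s) ^ (θ * p - 1) *
            (b + δ / (K ^ p * (t - s) ^ (θ * p - 1))) := h
          _ = K ^ p * (t - s) ^ (θ * p - 1) * b + δ := by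
            field_simp
      calc ENNReal.ofReal (|g t - g s| ^ p)
          ≤ ENNReal.ofReal (K ^ p * (t - s) ^ (θ * p - 1) * b) :=
            ENNReal.ofReal_le_ofReal hfinal
        _ = ENNReal.ofReal (K ^ p * (t - s) ^ (θ * p - 1)) * ENNReal.ofReal b :=
            ENNReal.ofReal_mul (by positivity)
        _ = ENNReal.ofReal (K ^ p * (t - s) ^ (θ * p - 1)) * Bst := by rw [hBofReal]
        _ ≤ ENNReal.ofReal (K ^ p * (t - s) ^ (θ * p - 1)) * Btot :=
            mul_le_mul_right hBle _
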